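/- Let G be a locally compact abelian group, let 𝒰 be a G-invariant uniformity on a set X, and let α: G × X → X be any group action. For U ∈ 𝒰 and an open set O ⊆ G containing 0 define V[O,U] := {(α(t,x), y) : t ∈ O, (x,y) ∈ U}, and set 𝒰_mix := {V ⊆ X × X : there exist U ∈ 𝒰 and an open O ∋ 0 with V[O,U] ⊆ V}. Then 𝒰_mix is a uniformity on X: every element of 𝒰_mix contains the diagonal; 𝒰_mix is closed upward; 𝒰_mix is closed under finite intersection; for every V ∈ 𝒰_mix there is V' ∈ 𝒰_mix with V' ∘ V' ⊆ V; and for every V ∈ 𝒰_mix the set V⁻¹ = {(x,y) : (y,x) ∈ V} belongs to 𝒰_mix. -/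

import Mathlib

open Uniformity

/-- The basic mixed entourage `V[O,U] = {(α t x, y) : t ∈ O, (x,y) ∈ U}`. -/
def mixEnt {G X : Type*} (α : G → X → X) (O : Set G) (U : Set (X × X)) : Set (X × X) :=
  {p : X × X | ∃ t ∈ O, ∃ q ∈ U, p.1 = α t q.1 ∧ p.2 = q.2}

/-- The mixed uniformity `𝒰_mix`: all supersets of some `V[O,U]` with `U ∈ 𝒰` and `O` an open
set containing `0`. -/
def mixUniformity {G X : Type*} [AddCommGroup G] [TopologicalSpace G] [UniformSpace X]
    (α : G → X → X) : Set (Set (X × X)) :=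
  {V : Set (X × X) | ∃ U ∈ 𝓤 X, ∃ O : Set G, IsOpen O ∧ (0 : G) ∈ O ∧ mixEnt α O U ⊆ V}

/-- If a locally compact abelian group `G` acts via `α` on a set `X` carrying
a `G`-invariant uniformity `𝒰`, then `𝒰_mix` is a uniformity on `X`. -/
theorem stmt10 {G X : Type*}
    [AddCommGroup G] [TopologicalSpace G] [IsTopologicalAddGroup G]
    [LocallyCompactSpace G] [T2Space G]
    [UniformSpace X]
    (α : G → X → X)
    (hzero : ∀ x, α 0 x = x)
    (hadd : ∀ s t x, α s (α t x) = α (s + t) x)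
    (hinv : ∀ U ∈ 𝓤 X, ∃ U' ∈ 𝓤 X, ∀ (t : G), ∀ p : X × X, p ∈ U' →
      (α t p.1, α t p.2) ∈ U) :
    -- every element of `𝒰_mix` contains the diagonal
    (∀ V ∈ mixUniformity α, ∀ x : X, (x, x) ∈ V)
    -- `𝒰_mix` is closed upward
    ∧ (∀ V ∈ mixUniformity α, ∀ W : Set (X × X), V ⊆ W → W ∈ mixUniformity α)
    -- `𝒰_mix` is closed under finite intersections
    ∧ (∀ V₁ ∈ mixUniformity α, ∀ V₂ ∈ mixUniformity α, V₁ ∩ V₂ ∈ mixUniformity α)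
    -- for each `V ∈ 𝒰_mix` there is `V' ∈ 𝒰_mix` with `V' ∘ V' ⊆ V`
    ∧ (∀ V ∈ mixUniformity α, ∃ V' ∈ mixUniformity α,
        {p : X × X | ∃ z : X, (p.1, z) ∈ V' ∧ (z, p.2) ∈ V'} ⊆ V)
    -- `𝒰_mix` is closed under inverses
    ∧ (∀ V ∈ mixUniformity α, {p : X × X | (p.2, p.1) ∈ V} ∈ mixUniformity α) := by
  refine ⟨?_, ?_, ?_, ?_, ?_⟩
  · rintro V ⟨U, hU, O, hO, h0, hsub⟩ x
    exact hsub ⟨0, h0, (x, x), refl_mem_uniformity hU, (hzero x).symm, rfl⟩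
  · rintro V ⟨U, hU, O, hO, h0, hsub⟩ W hVW
    exact ⟨U, hU, O, hO, h0, hsub.trans hVW⟩
  · rintro V₁ ⟨U₁, hU₁, O₁, hO₁, h0₁, hs₁⟩ V₂ ⟨U₂, hU₂, O₂, hO₂, h0₂, hs₂⟩
    refine ⟨U₁ ∩ U₂, Filter.inter_mem hU₁ hU₂, O₁ ∩ O₂, hO₁.inter hO₂, ⟨h0₁, h0₂⟩, ?_⟩
    rintro p ⟨t, ⟨ht₁, ht₂⟩, q, ⟨hq₁, hq₂⟩, h1, h2⟩
    exact ⟨hs₁ ⟨t, ht₁, q, hq₁, h1, h2⟩, hs₂ ⟨t, ht₂, q, hq₂, h1, h2⟩⟩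
  · rintro V ⟨U, hU, O, hO, h0, hsub⟩
    obtain ⟨W, hW, hWW⟩ := comp_mem_uniformity_sets hU
    obtain ⟨W', hW', hWinv⟩ := hinv W hW
    obtain ⟨O₁, hO₁mem, hO₁add⟩ := exists_nhds_zero_half (hO.mem_nhds h0)
    obtain ⟨O', hO'sub, hO'open, hO'0⟩ := mem_nhds_iff.mp hO₁mem
    refine ⟨mixEnt α O' (W ∩ W'),
      ⟨W ∩ W', Filter.inter_mem hW hW', O', hO'open, hO'0, subset_rfl⟩, ?_⟩
    rintro ⟨a, b⟩ ⟨z, ⟨s, hs, ⟨x, y⟩, ⟨hxyW, hxyW'⟩, ha, hz1⟩,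
      ⟨s', hs', ⟨x', y'⟩, ⟨hW2, hW2'⟩, hz2, hb⟩⟩
    simp only at ha hz1 hz2 hb
    -- z = y and z = α s' x'
    have hyx : (x, α s' x') ∈ W' := by rw [← hz2, hz1]; exact hxyW'
    have h1 : (α (-s') x, x') ∈ W := by
      have := hWinv (-s') (x, α s' x') hyx
      simpa [hadd, hzero] using this
    have hmemU : (α (-s') x, y') ∈ U := hWW ⟨x', h1, hW2⟩
    apply hsub
    refine ⟨s + s', hO₁add _ (hO'sub hs) _ (hO'sub hs'), (α (-s') x, y'), hmemU, ?_, hb⟩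
    simp only [ha, hadd]
    congr 1
    abel
  · rintro V ⟨U, hU, O, hO, h0, hsub⟩
    obtain ⟨U', hU', hU'inv⟩ := hinv U hU
    refine ⟨Prod.swap ⁻¹' U', Filter.tendsto_def.mp tendsto_swap_uniformity U' hU',
      O ∩ (fun t : G => -t) ⁻¹' O, hO.inter (hO.preimage continuous_neg),
      ⟨h0, by simpa using h0⟩, ?_⟩
    rintro ⟨a, b⟩ ⟨t, ⟨htO, htnO⟩, ⟨x, y⟩, hq, ha, hb⟩
    simp only at ha hb
    apply hsub
    refine ⟨-t, htnO, (α t y, α t x), hU'inv t (y, x) hq, ?_, ha⟩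
    simp [hb, hadd, hzero]
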